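/- Let g : ℝ × ℝⁿ → (symmetric positive-semidefinite continuous bilinear forms on ℝⁿ) be continuous and C¹ in the time variable, and let r > 0. Assume that (∂_t g)(t, x)(w, w) ≤ 0 for every t ≥ 0, every x in the closed ball of radius r about 0, and every w ∈ ℝⁿ. Define the instantwise distance d_t(x,y) := inf over C¹ curves c : [0,1] → ℝⁿ with c 0 = x and c 1 = y of ∫₀¹ √(g(t, c τ)(c' τ, c' τ)) dτ. Then: (i) for every u with ‖u‖ ≤ r and every t ≥ 0, d_t(0, u) ≤ √(∫₀¹ g(0, τ • u)(u, u) dτ); and (ii) for every ε > 0 there exists δ > 0 such that ‖u‖ < δ implies d_t(0, u) < ε for all t ≥ 0. In particular the constant solution 0 is Lyapunov stable with respect to the instantwise distance induced by g. -/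

import Mathlib

open Function intervalIntegral

variable {E : Type*} [NormedAddCommGroup E] [InnerProductSpace ℝ E]
  [FiniteDimensional ℝ E]

/-- The instantwise distance at time `t` between `x` and `y` determined by a
time-dependent metric `g`: the infimum of the `g(t)`-lengths of C¹ curves
from `x` to `y`. -/
noncomputable def instDist (g : ℝ → E → (E →L[ℝ] E →L[ℝ] ℝ))
    (t : ℝ) (x y : E) : ℝ :=
  sInf {L : ℝ | ∃ c : ℝ → E, ContDiff ℝ 1 c ∧ c 0 = x ∧ c 1 = y ∧
    L = ∫ τ in (0:ℝ)..1, Real.sqrt (g t (c τ) (deriv c τ) (deriv c τ))}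

/-- Jensen's inequality for the square root on `[0,1]`. -/
lemma my_integral_sqrt_le (h : ℝ → ℝ) (hc : Continuous h) (hpos : ∀ τ, 0 ≤ h τ) :
    (∫ τ in (0:ℝ)..1, Real.sqrt (h τ)) ≤ Real.sqrt (∫ τ in (0:ℝ)..1, h τ) := by
  have hprob : MeasureTheory.IsProbabilityMeasure
      (MeasureTheory.volume.restrict (Set.Ioc (0:ℝ) 1)) := by
    constructor
    simp [Real.volume_Ioc]
  rw [intervalIntegral.integral_of_le zero_le_one, intervalIntegral.integral_of_le zero_le_one]
  have hint : MeasureTheory.IntegrableOn h (Set.Ioc (0:ℝ) 1) :=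
    (hc.integrableOn_Icc (a := 0) (b := 1)).mono_set Set.Ioc_subset_Icc_self
  have hint2 : MeasureTheory.IntegrableOn (fun τ => Real.sqrt (h τ)) (Set.Ioc (0:ℝ) 1) :=
    ((Real.continuous_sqrt.comp hc).integrableOn_Icc (a := 0) (b := 1)).mono_set
      Set.Ioc_subset_Icc_self
  exact (Real.strictConcaveOn_sqrt.concaveOn).le_map_integral
    Real.continuous_sqrt.continuousOn isClosed_Ici
    (Filter.Eventually.of_forall fun τ => hpos τ) hint hint2

omit [FiniteDimensional ℝ E] in
/-- Monotonicity of `g` in time from nonpositive time derivative. -/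
lemma my_g_mono (g : ℝ → E → (E →L[ℝ] E →L[ℝ] ℝ)) (r : ℝ)
    (hgt : ∀ x : E, ContDiff ℝ 1 (fun t => g t x))
    (hneg : ∀ t : ℝ, 0 ≤ t → ∀ x : E, ‖x‖ ≤ r → ∀ w : E,
      deriv (fun t' => g t' x) t w w ≤ 0)
    (u : E) (x : E) (hx : ‖x‖ ≤ r) (s : ℝ) (hs : 0 ≤ s) :
    g s x u u ≤ g 0 x u u := by
  set L : (E →L[ℝ] E →L[ℝ] ℝ) →L[ℝ] ℝ :=
    (ContinuousLinearMap.apply ℝ ℝ u).comp (ContinuousLinearMap.apply ℝ (E →L[ℝ] ℝ) u) with hL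
  have hφderiv : ∀ s : ℝ, HasDerivAt (fun s' => g s' x u u)
      (deriv (fun t' => g t' x) s u u) s := by
    intro s
    have hf : HasDerivAt (fun t' => g t' x) (deriv (fun t' => g t' x) s) s :=
      (((hgt x).differentiable one_ne_zero) s).hasDerivAt
    have := L.hasFDerivAt.comp_hasDerivAt s (((hgt x).differentiable one_ne_zero) s).hasDerivAt
    exact this
  have hanti : AntitoneOn (fun s' => g s' x u u) (Set.Ici (0:ℝ)) := by
    refine antitoneOn_of_deriv_nonpos (convex_Ici 0) ?_ ?_ ?_
    · exact (L.continuous.comp (hgt x).continuous).continuousOn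
    · intro s' hs'
      exact (hφderiv s').differentiableAt.differentiableWithinAt
    · intro s' hs'
      rw [(hφderiv s').deriv]
      rw [interior_Ici] at hs'
      exact hneg s' (le_of_lt hs') x hx u
  exact hanti Set.self_mem_Ici hs hs

/-- If `∂ₜ g ≤ 0` for `t ≥ 0` on the closed ball of radius `r`, then
(i) the instantwise distance from `0` to any `u` with `‖u‖ ≤ r` at any
time `t ≥ 0` is bounded by the square root of the initial segment energy, and
(ii) the constant solution `0` is Lyapunov stable with respect to the
instantwise distance induced by `g`. -/
theorem lyapunov_stability_of_nonpositive_time_derivative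
    (g : ℝ → E → (E →L[ℝ] E →L[ℝ] ℝ)) (r : ℝ) (hr : 0 < r)
    (hg : Continuous (uncurry g))
    (hgt : ∀ x : E, ContDiff ℝ 1 (fun t => g t x))
    (hgsym : ∀ (t : ℝ) (x u w : E), g t x u w = g t x w u)
    (hgpos : ∀ (t : ℝ) (x w : E), 0 ≤ g t x w w)
    (hneg : ∀ t : ℝ, 0 ≤ t → ∀ x : E, ‖x‖ ≤ r → ∀ w : E,
      deriv (fun t' => g t' x) t w w ≤ 0) :
    (∀ u : E, ‖u‖ ≤ r → ∀ t : ℝ, 0 ≤ t →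
      instDist g t 0 u ≤ Real.sqrt (∫ τ in (0:ℝ)..1, g 0 (τ • u) u u)) ∧
    (∀ ε : ℝ, 0 < ε → ∃ δ : ℝ, 0 < δ ∧ ∀ u : E, ‖u‖ < δ →
      ∀ t : ℝ, 0 ≤ t → instDist g t 0 u < ε) := by
  -- continuity of τ ↦ g t (τ • u)
  have hcont : ∀ (t : ℝ) (u : E), Continuous fun τ : ℝ => g t (τ • u) u u := by
    intro t u
    have h1 : Continuous fun τ : ℝ => g t (τ • u) :=
      hg.comp (continuous_const.prodMk (continuous_id.smul continuous_const))
    exact (((ContinuousLinearMap.apply ℝ ℝ u).comp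
      (ContinuousLinearMap.apply ℝ (E →L[ℝ] ℝ) u)).continuous).comp h1
  have part1 : ∀ u : E, ‖u‖ ≤ r → ∀ t : ℝ, 0 ≤ t →
      instDist g t 0 u ≤ Real.sqrt (∫ τ in (0:ℝ)..1, g 0 (τ • u) u u) := by
    intro u hu t ht
    have hbdd : BddBelow {L : ℝ | ∃ c : ℝ → E, ContDiff ℝ 1 c ∧ c 0 = 0 ∧ c 1 = u ∧
        L = ∫ τ in (0:ℝ)..1, Real.sqrt (g t (c τ) (deriv c τ) (deriv c τ))} := by
      refine ⟨0, fun L hL => ?_⟩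
      obtain ⟨c, hc, h0, h1, rfl⟩ := hL
      exact intervalIntegral.integral_nonneg zero_le_one fun τ _ => Real.sqrt_nonneg _
    have hderivc : ∀ τ : ℝ, deriv (fun τ : ℝ => τ • u) τ = u := by
      intro τ
      have : HasDerivAt (fun τ : ℝ => τ • u) ((1:ℝ) • u) τ := (hasDerivAt_id τ).smul_const u
      simpa using this.deriv
    have hmem : (∫ τ in (0:ℝ)..1, Real.sqrt (g t (τ • u) u u)) ∈
        {L : ℝ | ∃ c : ℝ → E, ContDiff ℝ 1 c ∧ c 0 = 0 ∧ c 1 = u ∧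
          L = ∫ τ in (0:ℝ)..1, Real.sqrt (g t (c τ) (deriv c τ) (deriv c τ))} := by
      refine ⟨fun τ => τ • u, (contDiff_id.smul contDiff_const), by simp, by simp, ?_⟩
      simp only [hderivc]
    have hstep1 : instDist g t 0 u ≤ ∫ τ in (0:ℝ)..1, Real.sqrt (g t (τ • u) u u) :=
      csInf_le hbdd hmem
    have hnorm : ∀ τ ∈ Set.Icc (0:ℝ) 1, ‖τ • u‖ ≤ r := by
      intro τ hτ
      rw [norm_smul, Real.norm_eq_abs, abs_of_nonneg hτ.1]
      calc τ * ‖u‖ ≤ 1 * ‖u‖ := by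
            exact mul_le_mul_of_nonneg_right hτ.2 (norm_nonneg u)
        _ = ‖u‖ := one_mul _
        _ ≤ r := hu
    have hstep2 : (∫ τ in (0:ℝ)..1, Real.sqrt (g t (τ • u) u u)) ≤
        ∫ τ in (0:ℝ)..1, Real.sqrt (g 0 (τ • u) u u) := by
      apply intervalIntegral.integral_mono_on zero_le_one
        ((Real.continuous_sqrt.comp (hcont t u)).intervalIntegrable 0 1)
        ((Real.continuous_sqrt.comp (hcont 0 u)).intervalIntegrable 0 1)
      intro τ hτ
      exact Real.sqrt_le_sqrt (my_g_mono g r hgt hneg u (τ • u) (hnorm τ hτ) t ht)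
    have hstep3 : (∫ τ in (0:ℝ)..1, Real.sqrt (g 0 (τ • u) u u)) ≤
        Real.sqrt (∫ τ in (0:ℝ)..1, g 0 (τ • u) u u) :=
      my_integral_sqrt_le _ (hcont 0 u) fun τ => hgpos 0 (τ • u) u
    exact hstep1.trans (hstep2.trans hstep3)
  refine ⟨part1, ?_⟩
  intro ε hε
  -- bound ‖g 0 x‖ on the closed ball
  have hnc : Continuous fun x : E => ‖g 0 x‖ := by
    have h2 : Continuous fun x : E => ((0:ℝ), x) :=
      continuous_const.prodMk continuous_id
    have h3 : Continuous fun x : E => g 0 x := hg.comp h2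
    exact h3.norm (E := E →L[ℝ] E →L[ℝ] ℝ)
  obtain ⟨x₀, -, hC⟩ := (isCompact_closedBall (0:E) r).exists_isMaxOn
    ⟨0, Metric.mem_closedBall_self hr.le⟩ hnc.continuousOn
  set C : ℝ := ‖g 0 x₀‖ with hCdef
  have hC0 : 0 ≤ C := hCdef ▸ norm_nonneg (g 0 x₀)
  have hbound : ∀ u : E, ‖u‖ ≤ r → ∀ t : ℝ, 0 ≤ t →
      instDist g t 0 u ≤ Real.sqrt C * ‖u‖ := by
    intro u hu t ht
    have h1 := part1 u hu t ht
    have h2 : (∫ τ in (0:ℝ)..1, g 0 (τ • u) u u) ≤ C * ‖u‖ ^ 2 := by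
      have : ∀ τ ∈ Set.Icc (0:ℝ) 1, g 0 (τ • u) u u ≤ C * ‖u‖ ^ 2 := by
        intro τ hτ
        have hτu : τ • u ∈ Metric.closedBall (0:E) r := by
          rw [Metric.mem_closedBall, dist_zero_right, norm_smul, Real.norm_eq_abs,
            abs_of_nonneg hτ.1]
          nlinarith [norm_nonneg u, hτ.2, hτ.1]
        have := ContinuousLinearMap.le_opNorm₂ (g 0 (τ • u)) u u
        have hCb : ‖g 0 (τ • u)‖ ≤ C := isMaxOn_iff.mp hC (τ • u) hτu
        calc g 0 (τ • u) u u ≤ ‖g 0 (τ • u) u u‖ := le_abs_self _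
          _ ≤ ‖g 0 (τ • u)‖ * ‖u‖ * ‖u‖ := this
          _ ≤ C * ‖u‖ ^ 2 := by nlinarith [norm_nonneg u, norm_nonneg (g 0 (τ • u))]
      calc (∫ τ in (0:ℝ)..1, g 0 (τ • u) u u) ≤ ∫ _τ in (0:ℝ)..1, C * ‖u‖ ^ 2 :=
            intervalIntegral.integral_mono_on zero_le_one
              ((hcont 0 u).intervalIntegrable 0 1) intervalIntegrable_const this
        _ = C * ‖u‖ ^ 2 := by simp
    calc instDist g t 0 u ≤ Real.sqrt (∫ τ in (0:ℝ)..1, g 0 (τ • u) u u) := h1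
      _ ≤ Real.sqrt (C * ‖u‖ ^ 2) := Real.sqrt_le_sqrt h2
      _ = Real.sqrt C * ‖u‖ := by
          rw [Real.sqrt_mul hC0, Real.sqrt_sq (norm_nonneg u)]
  refine ⟨min r (ε / (Real.sqrt C + 1)), lt_min hr (by positivity), ?_⟩
  intro u hu t ht
  have hur : ‖u‖ ≤ r := le_of_lt (lt_of_lt_of_le hu (min_le_left _ _))
  have huε : ‖u‖ < ε / (Real.sqrt C + 1) := lt_of_lt_of_le hu (min_le_right _ _)
  have hsq : 0 ≤ Real.sqrt C := Real.sqrt_nonneg C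
  calc instDist g t 0 u ≤ Real.sqrt C * ‖u‖ := hbound u hur t ht
    _ < ε := by
        have hpos : (0:ℝ) < Real.sqrt C + 1 := by linarith
        rw [lt_div_iff₀ hpos] at huε
        nlinarith [norm_nonneg u]
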